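/- Let A and B be nonempty subsets of a complete metric space (X,d), g : X → X self-cyclic with respect to A and B and injective, with g(A) and g(B) closed. If F : X × X → X is a Banach type g-coupling with respect to A and B with constant k ∈ (0,1), then F and g have a unique strong coupled coincidence point in A ∩ B: there is a unique a ∈ A ∩ B with F(a,a) = g(a). -/

import Mathlib

theorem unique_strong_coupled_coincidence {X : Type*} [MetricSpace X] [CompleteSpace X]
    (A B : Set X) (hA : A.Nonempty) (hB : B.Nonempty)
    (g : X → X) (hginj : Function.Injective g)
    (hsc : g '' A ⊆ A ∧ g '' B ⊆ B)
    (hclA : IsClosed (g '' A)) (hclB : IsClosed (g '' B))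
    (F : X → X → X) (k : ℝ) (hk : k ∈ Set.Ioo (0:ℝ) 1)
    (hgc : ∀ x ∈ A, ∀ y ∈ B, F x y ∈ g '' A ∩ B ∧ F y x ∈ g '' B ∩ A)
    (hban : ∀ x ∈ A, ∀ v ∈ A, ∀ y ∈ B, ∀ u ∈ B,
      dist (F x y) (F u v) ≤ k / 2 * (dist (g x) (g u) + dist (g y) (g v))) :
    ∃! a : X, a ∈ A ∩ B ∧ F a a = g a := by
  obtain ⟨hk0, hk1⟩ := hk
  obtain ⟨x0, hx0⟩ := hA
  obtain ⟨y0, hy0⟩ := hB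
  -- step function
  have hstep : ∀ p : X × X, ∃ q : X × X, p.1 ∈ A → p.2 ∈ B →
      q.1 ∈ A ∧ q.2 ∈ B ∧ g q.1 = F p.1 p.2 ∧ g q.2 = F p.2 p.1 := by
    intro p
    by_cases h1 : p.1 ∈ A
    · by_cases h2 : p.2 ∈ B
      · obtain ⟨h3, h4⟩ := hgc p.1 h1 p.2 h2
        obtain ⟨⟨x', hx', hgx'⟩, -⟩ := h3
        obtain ⟨⟨y', hy', hgy'⟩, -⟩ := h4
        exact ⟨(x', y'), fun _ _ => ⟨hx', hy', hgx', hgy'⟩⟩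
      · exact ⟨p, fun _ h => absurd h h2⟩
    · exact ⟨p, fun h _ => absurd h h1⟩
  choose nxt hnxt using hstep
  set xs : ℕ → X := fun n => (nxt^[n] (x0, y0)).1 with hxs
  set ys : ℕ → X := fun n => (nxt^[n] (x0, y0)).2 with hys
  have hmem : ∀ n, xs n ∈ A ∧ ys n ∈ B := by
    intro n
    induction n with
    | zero => exact ⟨hx0, hy0⟩
    | succ n ih =>
      have : nxt^[n+1] (x0, y0) = nxt (nxt^[n] (x0, y0)) := Function.iterate_succ_apply' _ _ _
      simp only [hxs, hys, this]
      exact ⟨(hnxt _ ih.1 ih.2).1, (hnxt _ ih.1 ih.2).2.1⟩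
  have hmA : ∀ n, xs n ∈ A := fun n => (hmem n).1
  have hmB : ∀ n, ys n ∈ B := fun n => (hmem n).2
  have hgx : ∀ n, g (xs (n+1)) = F (xs n) (ys n) := by
    intro n
    have h : nxt^[n+1] (x0, y0) = nxt (nxt^[n] (x0, y0)) := Function.iterate_succ_apply' _ _ _
    simp only [hxs, hys, h]
    exact (hnxt _ (hmA n) (hmB n)).2.2.1
  have hgy : ∀ n, g (ys (n+1)) = F (ys n) (xs n) := by
    intro n
    have h : nxt^[n+1] (x0, y0) = nxt (nxt^[n] (x0, y0)) := Function.iterate_succ_apply' _ _ _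
    simp only [hxs, hys, h]
    exact (hnxt _ (hmA n) (hmB n)).2.2.2
  -- diagonal distance a n
  set a : ℕ → ℝ := fun n => dist (g (xs n)) (g (ys n)) with ha
  have hastep : ∀ n, a (n+1) ≤ k * a n := by
    intro n
    have := hban (xs n) (hmA n) (xs n) (hmA n) (ys n) (hmB n) (ys n) (hmB n)
    rw [dist_comm (g (ys n)) (g (xs n))] at this
    calc a (n+1) = dist (F (xs n) (ys n)) (F (ys n) (xs n)) := by rw [ha]; simp [hgx n, hgy n]
    _ ≤ k / 2 * (dist (g (xs n)) (g (ys n)) + dist (g (xs n)) (g (ys n))) := this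
    _ = k * a n := by rw [ha]; ring
  have haN : ∀ n, a n ≤ k ^ n * a 0 := by
    intro n
    induction n with
    | zero => simp
    | succ n ih =>
      calc a (n+1) ≤ k * a n := hastep n
      _ ≤ k * (k ^ n * a 0) := by nlinarith
      _ = k ^ (n+1) * a 0 := by ring
  -- off-diagonal c n
  set c : ℕ → ℝ := fun n => dist (g (xs (n+1))) (g (ys n)) + dist (g (ys (n+1))) (g (xs n)) with hc
  have hcstep : ∀ n, c (n+1) ≤ k * c n := by
    intro n
    have h1 := hban (xs (n+1)) (hmA (n+1)) (xs n) (hmA n) (ys (n+1)) (hmB (n+1)) (ys n) (hmB n)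
    have h2 := hban (xs n) (hmA n) (xs (n+1)) (hmA (n+1)) (ys n) (hmB n) (ys (n+1)) (hmB (n+1))
    have e1 : dist (g (xs (n+2))) (g (ys (n+1))) = dist (F (xs (n+1)) (ys (n+1))) (F (ys n) (xs n)) := by
      rw [hgx (n+1), hgy n]
    have e2 : dist (g (ys (n+2))) (g (xs (n+1))) = dist (F (xs n) (ys n)) (F (ys (n+1)) (xs (n+1))) := by
      rw [hgy (n+1), hgx n, dist_comm]
    have hc1 : dist (g (xs (n+2))) (g (ys (n+1))) ≤ k / 2 * c n := by
      rw [e1, hc]; exact h1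
    have hc2 : dist (g (ys (n+2))) (g (xs (n+1))) ≤ k / 2 * c n := by
      rw [e2, hc]
      calc dist (F (xs n) (ys n)) (F (ys (n+1)) (xs (n+1)))
          ≤ k / 2 * (dist (g (xs n)) (g (ys (n+1))) + dist (g (ys n)) (g (xs (n+1)))) := h2
        _ = k / 2 * (dist (g (xs (n+1))) (g (ys n)) + dist (g (ys (n+1))) (g (xs n))) := by
            rw [dist_comm (g (xs n)), dist_comm (g (ys n))]; ring
    calc c (n+1) = dist (g (xs (n+2))) (g (ys (n+1))) + dist (g (ys (n+2))) (g (xs (n+1))) := rfl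
    _ ≤ k / 2 * c n + k / 2 * c n := add_le_add hc1 hc2
    _ = k * c n := by ring
  have hcN : ∀ n, c n ≤ k ^ n * c 0 := by
    intro n
    induction n with
    | zero => simp
    | succ n ih =>
      calc c (n+1) ≤ k * c n := hcstep n
      _ ≤ k * (k ^ n * c 0) := by nlinarith
      _ = k ^ (n+1) * c 0 := by ring
  -- Cauchy sequences
  set C : ℝ := c 0 + a 0 with hC
  have hxcauchy_bound : ∀ n, dist (g (xs n)) (g (xs (n+1))) ≤ C * k ^ n := by
    intro n
    calc dist (g (xs n)) (g (xs (n+1)))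
        ≤ dist (g (xs (n+1))) (g (ys n)) + dist (g (xs n)) (g (ys n)) := by
          rw [dist_comm (g (xs n)) (g (xs (n+1)))]
          have := dist_triangle (g (xs (n+1))) (g (ys n)) (g (xs n))
          rw [dist_comm (g (ys n)) (g (xs n))] at this
          linarith
      _ ≤ c n + a n := by
          have h1 : dist (g (ys (n+1))) (g (xs n)) ≥ 0 := dist_nonneg
          simp only [hc, ha]; linarith
      _ ≤ k ^ n * c 0 + k ^ n * a 0 := add_le_add (hcN n) (haN n)
      _ = C * k ^ n := by rw [hC]; ring
  have hycauchy_bound : ∀ n, dist (g (ys n)) (g (ys (n+1))) ≤ C * k ^ n := by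
    intro n
    calc dist (g (ys n)) (g (ys (n+1)))
        ≤ dist (g (ys (n+1))) (g (xs n)) + dist (g (xs n)) (g (ys n)) := by
          rw [dist_comm (g (ys n)) (g (ys (n+1)))]
          exact dist_triangle _ _ _
      _ ≤ c n + a n := by
          have h1 : dist (g (xs (n+1))) (g (ys n)) ≥ 0 := dist_nonneg
          simp only [hc, ha]; linarith
      _ ≤ k ^ n * c 0 + k ^ n * a 0 := add_le_add (hcN n) (haN n)
      _ = C * k ^ n := by rw [hC]; ring
  have hxC : CauchySeq (fun n => g (xs n)) :=
    cauchySeq_of_le_geometric k C hk1 hxcauchy_bound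
  obtain ⟨p, hp⟩ := cauchySeq_tendsto_of_complete hxC
  have hkpow : Filter.Tendsto (fun n : ℕ => k ^ n) Filter.atTop (nhds 0) :=
    tendsto_pow_atTop_nhds_zero_of_lt_one (le_of_lt hk0) hk1
  have hdxy : Filter.Tendsto (fun n => dist (g (xs n)) (g (ys n))) Filter.atTop (nhds 0) := by
    have h0 : Filter.Tendsto (fun n : ℕ => k ^ n * a 0) Filter.atTop (nhds 0) := by
      simpa using hkpow.mul_const (a 0)
    refine squeeze_zero (fun n => dist_nonneg) (fun n => haN n) h0
  have hpy : Filter.Tendsto (fun n => g (ys n)) Filter.atTop (nhds p) := by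
    apply hp.congr_dist
    simpa [dist_comm] using hdxy
  -- p in g '' A and g '' B
  have hpA : p ∈ g '' A :=
    hclA.mem_of_tendsto hp (Filter.Eventually.of_forall fun n => ⟨xs n, hmA n, rfl⟩)
  have hpB : p ∈ g '' B :=
    hclB.mem_of_tendsto hpy (Filter.Eventually.of_forall fun n => ⟨ys n, hmB n, rfl⟩)
  obtain ⟨aP, haA, hga⟩ := hpA
  obtain ⟨bP, hbB, hgb⟩ := hpB
  have hab : aP = bP := hginj (by rw [hga, hgb])
  have haB : aP ∈ B := hab ▸ hbB
  -- F aP aP = g aP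
  have hFa : F aP aP = g aP := by
    have hbound : ∀ n, dist (F aP aP) p ≤
        k / 2 * (dist (g aP) (g (ys n)) + dist (g aP) (g (xs n))) + dist (g (ys (n+1))) p := by
      intro n
      have h := hban aP haA (xs n) (hmA n) aP haB (ys n) (hmB n)
      calc dist (F aP aP) p ≤ dist (F aP aP) (g (ys (n+1))) + dist (g (ys (n+1))) p :=
            dist_triangle _ _ _
        _ ≤ k / 2 * (dist (g aP) (g (ys n)) + dist (g aP) (g (xs n))) + dist (g (ys (n+1))) p := by
            rw [hgy n]; exact add_le_add h le_rfl
    have hlim : Filter.Tendsto (fun n =>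
        k / 2 * (dist (g aP) (g (ys n)) + dist (g aP) (g (xs n))) + dist (g (ys (n+1))) p)
        Filter.atTop (nhds 0) := by
      have h1 : Filter.Tendsto (fun n => dist (g aP) (g (ys n))) Filter.atTop (nhds 0) := by
        have := hpy.dist (tendsto_const_nhds (x := p))
        rw [hga]
        simpa [dist_comm] using (tendsto_const_nhds (x := p) (f := Filter.atTop (α := ℕ))).dist hpy
      have h2 : Filter.Tendsto (fun n => dist (g aP) (g (xs n))) Filter.atTop (nhds 0) := by
        rw [hga]
        simpa using (tendsto_const_nhds (x := p) (f := Filter.atTop (α := ℕ))).dist hp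
      have h3 : Filter.Tendsto (fun n => dist (g (ys (n+1))) p) Filter.atTop (nhds 0) := by
        have := (tendsto_iff_dist_tendsto_zero.mp hpy)
        exact this.comp (Filter.tendsto_add_atTop_nat 1)
      have := ((h1.add h2).const_mul (k / 2)).add h3
      simpa using this
    have hle : dist (F aP aP) p ≤ 0 :=
      le_of_tendsto_of_tendsto' tendsto_const_nhds hlim hbound
    have : dist (F aP aP) p = 0 := le_antisymm hle dist_nonneg
    rw [dist_eq_zero] at this
    rw [this, hga]
  refine ⟨aP, ⟨⟨haA, haB⟩, hFa⟩, ?_⟩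
  rintro b ⟨⟨hbA, hbB'⟩, hFb⟩
  have h := hban b hbA aP haA b hbB' aP haB
  rw [hFb, hFa] at h
  have hd : dist (g b) (g aP) ≤ k * dist (g b) (g aP) := by linarith
  have hd0 : dist (g b) (g aP) = 0 := by nlinarith [dist_nonneg (x := g b) (y := g aP)]
  exact hginj (dist_eq_zero.mp hd0)
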